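/- (Smoothness of the fractional potential.) Assume 0 ≤ c_e(ℓ) ≤ c_max for every e ∈ E and every ℓ ∈ {0,…,n}. Then the gradient of Φ is Lipschitz with constant 2 n² c_max √m on the box: for all x, x' with x_{j,e}, x'_{j,e} ∈ [0,1] for every agent j and resource e, ‖∇Φ(x) − ∇Φ(x')‖₂ ≤ 2 n² c_max √m · ‖x − x'‖₂, where ∇Φ denotes the gradient of Φ with respect to the Euclidean inner product on ℝ^{n·m}. -/

import Mathlib

open Finset


/-- Total-variation style bound for product Bernoulli measures. -/
lemma tv_bound {ι : Type*} [DecidableEq ι] (T : Finset ι) (a b : ι → ℝ)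
    (ha : ∀ i, 0 ≤ a i ∧ a i ≤ 1) (hb : ∀ i, 0 ≤ b i ∧ b i ≤ 1) :
    ∑ S ∈ T.powerset, |(∏ j ∈ S, a j) * ∏ j ∈ T \ S, (1 - a j)
        - (∏ j ∈ S, b j) * ∏ j ∈ T \ S, (1 - b j)| ≤ 2 * ∑ j ∈ T, |a j - b j| := by
  classical
  induction T using Finset.induction_on with
  | empty => simp
  | @insert k T' hk IH =>
    rw [Finset.sum_powerset_insert hk]
    have hPb_nonneg : ∀ S ∈ T'.powerset,
        0 ≤ (∏ j ∈ S, b j) * ∏ j ∈ T' \ S, (1 - b j) := by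
      intro S _
      apply mul_nonneg
      · exact Finset.prod_nonneg fun j _ => (hb j).1
      · exact Finset.prod_nonneg fun j _ => by linarith [(hb j).2]
    have hPb_sum : ∑ S ∈ T'.powerset, (∏ j ∈ S, b j) * ∏ j ∈ T' \ S, (1 - b j) = 1 := by
      rw [← Finset.prod_add b (fun j => 1 - b j) T']
      simp
    -- rewrite first sum
    have e1 : ∀ S ∈ T'.powerset,
        |(∏ j ∈ S, a j) * ∏ j ∈ insert k T' \ S, (1 - a j)
          - (∏ j ∈ S, b j) * ∏ j ∈ insert k T' \ S, (1 - b j)|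
        = |(1 - a k) * ((∏ j ∈ S, a j) * ∏ j ∈ T' \ S, (1 - a j))
          - (1 - b k) * ((∏ j ∈ S, b j) * ∏ j ∈ T' \ S, (1 - b j))| := by
      intro S hS
      rw [Finset.mem_powerset] at hS
      have hkS : k ∉ S := fun h => hk (hS h)
      rw [Finset.insert_sdiff_of_notMem _ hkS,
        Finset.prod_insert (fun h => hk (Finset.mem_sdiff.1 h).1),
        Finset.prod_insert (fun h => hk (Finset.mem_sdiff.1 h).1)]
      ring_nf
    have e2 : ∀ S ∈ T'.powerset,
        |(∏ j ∈ insert k S, a j) * ∏ j ∈ insert k T' \ insert k S, (1 - a j)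
          - (∏ j ∈ insert k S, b j) * ∏ j ∈ insert k T' \ insert k S, (1 - b j)|
        = |a k * ((∏ j ∈ S, a j) * ∏ j ∈ T' \ S, (1 - a j))
          - b k * ((∏ j ∈ S, b j) * ∏ j ∈ T' \ S, (1 - b j))| := by
      intro S hS
      rw [Finset.mem_powerset] at hS
      have hkS : k ∉ S := fun h => hk (hS h)
      have hset : insert k T' \ insert k S = T' \ S := by
        rw [Finset.insert_sdiff_insert, Finset.sdiff_insert,
          Finset.erase_eq_of_notMem (fun h => hk (Finset.mem_sdiff.1 h).1)]
      rw [hset, Finset.prod_insert hkS, Finset.prod_insert hkS]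
      ring_nf
    rw [Finset.sum_congr rfl e1, Finset.sum_congr rfl e2]
    have hbound : ∀ S ∈ T'.powerset,
        |(1 - a k) * ((∏ j ∈ S, a j) * ∏ j ∈ T' \ S, (1 - a j))
          - (1 - b k) * ((∏ j ∈ S, b j) * ∏ j ∈ T' \ S, (1 - b j))|
        + |a k * ((∏ j ∈ S, a j) * ∏ j ∈ T' \ S, (1 - a j))
          - b k * ((∏ j ∈ S, b j) * ∏ j ∈ T' \ S, (1 - b j))|
        ≤ |(∏ j ∈ S, a j) * ∏ j ∈ T' \ S, (1 - a j)
            - (∏ j ∈ S, b j) * ∏ j ∈ T' \ S, (1 - b j)|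
          + 2 * |a k - b k| * ((∏ j ∈ S, b j) * ∏ j ∈ T' \ S, (1 - b j)) := by
      intro S hS
      set Pa := (∏ j ∈ S, a j) * ∏ j ∈ T' \ S, (1 - a j) with hPa
      set Pb := (∏ j ∈ S, b j) * ∏ j ∈ T' \ S, (1 - b j) with hPb
      have hPbn : 0 ≤ Pb := hPb_nonneg S hS
      have h1 : |(1 - a k) * Pa - (1 - b k) * Pb| ≤ (1 - a k) * |Pa - Pb| + |a k - b k| * Pb := by
        have : (1 - a k) * Pa - (1 - b k) * Pb = (1 - a k) * (Pa - Pb) + (b k - a k) * Pb := by ring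
        rw [this]
        refine (abs_add_le _ _).trans ?_
        rw [abs_mul, abs_mul, abs_of_nonneg (by linarith [(ha k).2] : (0:ℝ) ≤ 1 - a k),
          abs_of_nonneg hPbn, abs_sub_comm (b k)]
      have h2 : |a k * Pa - b k * Pb| ≤ a k * |Pa - Pb| + |a k - b k| * Pb := by
        have : a k * Pa - b k * Pb = a k * (Pa - Pb) + (a k - b k) * Pb := by ring
        rw [this]
        refine (abs_add_le _ _).trans ?_
        rw [abs_mul, abs_mul, abs_of_nonneg (ha k).1, abs_of_nonneg hPbn]
      nlinarith [h1, h2]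
    calc ∑ S ∈ T'.powerset, |(1 - a k) * ((∏ j ∈ S, a j) * ∏ j ∈ T' \ S, (1 - a j))
              - (1 - b k) * ((∏ j ∈ S, b j) * ∏ j ∈ T' \ S, (1 - b j))|
          + ∑ S ∈ T'.powerset, |a k * ((∏ j ∈ S, a j) * ∏ j ∈ T' \ S, (1 - a j))
              - b k * ((∏ j ∈ S, b j) * ∏ j ∈ T' \ S, (1 - b j))|
        = ∑ S ∈ T'.powerset, (|(1 - a k) * ((∏ j ∈ S, a j) * ∏ j ∈ T' \ S, (1 - a j))
              - (1 - b k) * ((∏ j ∈ S, b j) * ∏ j ∈ T' \ S, (1 - b j))|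
            + |a k * ((∏ j ∈ S, a j) * ∏ j ∈ T' \ S, (1 - a j))
              - b k * ((∏ j ∈ S, b j) * ∏ j ∈ T' \ S, (1 - b j))|) := by
          rw [Finset.sum_add_distrib]
      _ ≤ ∑ S ∈ T'.powerset, (|(∏ j ∈ S, a j) * ∏ j ∈ T' \ S, (1 - a j)
              - (∏ j ∈ S, b j) * ∏ j ∈ T' \ S, (1 - b j)|
            + 2 * |a k - b k| * ((∏ j ∈ S, b j) * ∏ j ∈ T' \ S, (1 - b j))) :=
          Finset.sum_le_sum hbound
      _ = (∑ S ∈ T'.powerset, |(∏ j ∈ S, a j) * ∏ j ∈ T' \ S, (1 - a j)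
              - (∏ j ∈ S, b j) * ∏ j ∈ T' \ S, (1 - b j)|)
            + 2 * |a k - b k| * ∑ S ∈ T'.powerset, (∏ j ∈ S, b j) * ∏ j ∈ T' \ S, (1 - b j) := by
          rw [Finset.sum_add_distrib, Finset.mul_sum]
      _ ≤ 2 * ∑ j ∈ T', |a j - b j| + 2 * |a k - b k| * 1 := by
          rw [hPb_sum]; exact add_le_add IH le_rfl
      _ = 2 * ∑ j ∈ insert k T', |a j - b j| := by
          rw [Finset.sum_insert hk]; ring

lemma powerset_split {ι : Type*} [Fintype ι] [DecidableEq ι] (i : ι) (G : Finset ι → ℝ) :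
    ∑ S ∈ (univ : Finset ι).powerset, G S
      = ∑ T ∈ ((univ : Finset ι).erase i).powerset, (G T + G (insert i T)) := by
  conv_lhs => rw [show (univ : Finset ι) = insert i (univ.erase i) from
    (Finset.insert_erase (mem_univ i)).symm]
  rw [Finset.sum_powerset_insert (Finset.notMem_erase i univ), Finset.sum_add_distrib]

lemma key_identity {ι : Type*} [Fintype ι] [DecidableEq ι] (y v : ι → ℝ) (C : ℕ → ℝ) :
    ∑ S ∈ (univ : Finset ι).powerset,
        C S.card * ((∑ i ∈ S, (∏ j ∈ S.erase i, y j) * v i) * (∏ j ∈ univ \ S, (1 - y j))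
          - (∏ j ∈ S, y j) * ∑ i ∈ univ \ S, (∏ j ∈ (univ \ S).erase i, (1 - y j)) * v i)
      = ∑ i : ι, (∑ S ∈ ((univ : Finset ι).erase i).powerset,
          (∏ j ∈ S, y j) * (∏ j ∈ (univ.erase i) \ S, (1 - y j)) * (C (S.card + 1) - C S.card))
            * v i := by
  classical
  set f : ι → Finset ι → ℝ := fun i S =>
    C S.card * ((∏ j ∈ S.erase i, y j) * (∏ j ∈ univ \ S, (1 - y j))) * v i with hf
  set g : ι → Finset ι → ℝ := fun i S =>
    C S.card * ((∏ j ∈ S, y j) * (∏ j ∈ (univ \ S).erase i, (1 - y j))) * v i with hg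
  have lhs_eq : ∀ S ∈ (univ : Finset ι).powerset,
      C S.card * ((∑ i ∈ S, (∏ j ∈ S.erase i, y j) * v i) * (∏ j ∈ univ \ S, (1 - y j))
          - (∏ j ∈ S, y j) * ∑ i ∈ univ \ S, (∏ j ∈ (univ \ S).erase i, (1 - y j)) * v i)
      = ∑ i : ι, (if i ∈ S then f i S else - g i S) := by
    intro S _
    have step1 : ∑ i : ι, (if i ∈ S then f i S else - g i S)
        = ∑ i : ι, ((if i ∈ S then f i S else 0) + (if i ∈ S then 0 else - g i S)) :=
      Finset.sum_congr rfl fun i _ => by split <;> ring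
    rw [step1, Finset.sum_add_distrib, Finset.sum_ite_mem, univ_inter]
    have step2 : ∑ i : ι, (if i ∈ S then 0 else - g i S)
        = ∑ i ∈ univ \ S, (- g i S) := by
      calc ∑ i : ι, (if i ∈ S then 0 else - g i S)
          = ∑ i : ι, (if i ∈ univ \ S then - g i S else 0) :=
            Finset.sum_congr rfl fun i _ => by
              by_cases h : i ∈ S <;> simp [h, Finset.mem_sdiff]
        _ = ∑ i ∈ univ ∩ (univ \ S), (- g i S) := Finset.sum_ite_mem _ _ _
        _ = ∑ i ∈ univ \ S, (- g i S) := by rw [univ_inter]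
    rw [step2, mul_sub]
    rw [Finset.sum_neg_distrib]
    congr 1
    · rw [Finset.sum_mul, Finset.mul_sum]
      exact Finset.sum_congr rfl fun i _ => by simp only [hf]; ring
    · rw [Finset.mul_sum, Finset.mul_sum]
      exact Finset.sum_congr rfl fun i _ => by simp only [hg]; ring
  rw [Finset.sum_congr rfl lhs_eq, Finset.sum_comm]
  refine Finset.sum_congr rfl fun i _ => ?_
  rw [powerset_split i (fun S => if i ∈ S then f i S else - g i S), Finset.sum_mul]
  refine Finset.sum_congr rfl fun T hT => ?_
  rw [Finset.mem_powerset] at hT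
  have hiT : i ∉ T := fun h => (Finset.notMem_erase i univ) (hT h)
  have hset : univ \ insert i T = (univ.erase i) \ T := by
    ext j
    simp only [Finset.mem_sdiff, Finset.mem_insert, Finset.mem_erase, Finset.mem_univ,
      true_and]
    tauto
  rw [if_neg hiT, if_pos (Finset.mem_insert_self i T)]
  have hset2 : (univ \ T).erase i = (univ.erase i) \ T := by
    ext j
    simp only [Finset.mem_sdiff, Finset.mem_erase, Finset.mem_univ, true_and]
    tauto
  simp only [hf, hg, Finset.erase_insert hiT, Finset.card_insert_of_notMem hiT, hset, hset2]
  ring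

lemma hasGrad {E : Type*} [Fintype E] (n : ℕ) (c : E → ℕ → ℝ)
    (x : EuclideanSpace ℝ (Fin n × E)) :
    HasGradientAt (fun x : EuclideanSpace ℝ (Fin n × E) => ∑ e : E,
        ∑ S ∈ (univ : Finset (Fin n)).powerset,
          (∏ j ∈ S, x (j, e)) * (∏ j ∈ univ \ S, (1 - x (j, e))) *
            ∑ ℓ ∈ Finset.range (S.card + 1), c e ℓ)
      ((WithLp.equiv 2 _).symm fun p : Fin n × E =>
        ∑ S ∈ ((univ : Finset (Fin n)).erase p.1).powerset,
          (∏ j ∈ S, x (j, p.2)) * (∏ j ∈ ((univ : Finset (Fin n)).erase p.1) \ S, (1 - x (j, p.2)))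
            * c p.2 (S.card + 1)) x := by
  classical
  rw [hasGradientAt_iff_hasFDerivAt]
  have hproj : ∀ p : Fin n × E,
      HasFDerivAt (fun y : EuclideanSpace ℝ (Fin n × E) => y p)
        (EuclideanSpace.proj p : EuclideanSpace ℝ (Fin n × E) →L[ℝ] ℝ) x :=
    fun p => (EuclideanSpace.proj p : EuclideanSpace ℝ (Fin n × E) →L[ℝ] ℝ).hasFDerivAt
  have hterm : ∀ (e : E) (S : Finset (Fin n)), HasFDerivAt
      (fun y : EuclideanSpace ℝ (Fin n × E) =>
        (∏ j ∈ S, y (j, e)) * (∏ j ∈ univ \ S, (1 - y (j, e))) *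
          ∑ ℓ ∈ Finset.range (S.card + 1), c e ℓ)
      ((∑ ℓ ∈ Finset.range (S.card + 1), c e ℓ) •
        ((∏ j ∈ S, x (j, e)) •
            (∑ i ∈ univ \ S, (∏ j ∈ (univ \ S).erase i, (1 - x (j, e))) •
              (-(EuclideanSpace.proj (i, e) : EuclideanSpace ℝ (Fin n × E) →L[ℝ] ℝ)))
          + (∏ j ∈ univ \ S, (1 - x (j, e))) •
            (∑ i ∈ S, (∏ j ∈ S.erase i, x (j, e)) •
              (EuclideanSpace.proj (i, e) : EuclideanSpace ℝ (Fin n × E) →L[ℝ] ℝ)))) x := by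
    intro e S
    have hA : HasFDerivAt (fun y : EuclideanSpace ℝ (Fin n × E) => ∏ j ∈ S, y (j, e))
        (∑ i ∈ S, (∏ j ∈ S.erase i, x (j, e)) •
          (EuclideanSpace.proj (i, e) : EuclideanSpace ℝ (Fin n × E) →L[ℝ] ℝ)) x :=
      HasFDerivAt.finset_prod fun i _ => hproj (i, e)
    have hB : HasFDerivAt (fun y : EuclideanSpace ℝ (Fin n × E) => ∏ j ∈ univ \ S, (1 - y (j, e)))
        (∑ i ∈ univ \ S, (∏ j ∈ (univ \ S).erase i, (1 - x (j, e))) •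
          (-(EuclideanSpace.proj (i, e) : EuclideanSpace ℝ (Fin n × E) →L[ℝ] ℝ))) x :=
      HasFDerivAt.finset_prod fun i _ => (hproj (i, e)).const_sub 1
    exact (hA.mul hB).mul_const _
  have hsum := HasFDerivAt.fun_sum (u := (univ : Finset E))
    (fun e _ => HasFDerivAt.fun_sum (u := (univ : Finset (Fin n)).powerset)
      (fun S _ => hterm e S))
  refine hsum.congr_fderiv ?_
  apply ContinuousLinearMap.ext
  intro v
  simp only [ContinuousLinearMap.sum_apply, ContinuousLinearMap.smul_apply,
    ContinuousLinearMap.add_apply, ContinuousLinearMap.neg_apply, smul_eq_mul,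
    InnerProductSpace.toDual_apply_apply, PiLp.inner_apply, RCLike.inner_apply, conj_trivial,
    WithLp.equiv_symm_apply, PiLp.toLp_apply]
  have step1 : ∀ e ∈ (univ : Finset E), ∀ S ∈ (univ : Finset (Fin n)).powerset,
      (∑ ℓ ∈ Finset.range (S.card + 1), c e ℓ) *
        ((∏ j ∈ S, x (j, e)) *
            ∑ i ∈ univ \ S, (∏ j ∈ (univ \ S).erase i, (1 - x (j, e))) *
              -((EuclideanSpace.proj (i, e) : EuclideanSpace ℝ (Fin n × E) →L[ℝ] ℝ) v) +
          (∏ j ∈ univ \ S, (1 - x (j, e))) *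
            ∑ i ∈ S, (∏ j ∈ S.erase i, x (j, e)) *
              (EuclideanSpace.proj (i, e) : EuclideanSpace ℝ (Fin n × E) →L[ℝ] ℝ) v)
      = (∑ ℓ ∈ Finset.range (S.card + 1), c e ℓ) *
        ((∑ i ∈ S, (∏ j ∈ S.erase i, x (j, e)) * v (i, e)) * (∏ j ∈ univ \ S, (1 - x (j, e)))
          - (∏ j ∈ S, x (j, e)) *
              ∑ i ∈ univ \ S, (∏ j ∈ (univ \ S).erase i, (1 - x (j, e))) * v (i, e)) := by
    intro e _ S _
    simp only [PiLp.proj_apply, mul_neg, Finset.sum_neg_distrib]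
    ring
  rw [Finset.sum_congr rfl fun e he => Finset.sum_congr rfl fun S hS => step1 e he S hS]
  have rhs_eq : ∑ p : Fin n × E, (∑ S ∈ ((univ : Finset (Fin n)).erase p.1).powerset,
        (∏ j ∈ S, x (j, p.2)) * (∏ j ∈ ((univ : Finset (Fin n)).erase p.1) \ S, (1 - x (j, p.2)))
          * c p.2 (S.card + 1)) * v p
      = ∑ e : E, ∑ i : Fin n, (∑ S ∈ ((univ : Finset (Fin n)).erase i).powerset,
          (∏ j ∈ S, x (j, e)) * (∏ j ∈ ((univ : Finset (Fin n)).erase i) \ S, (1 - x (j, e))) *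
            ((∑ ℓ ∈ Finset.range (S.card + 1 + 1), c e ℓ)
              - ∑ ℓ ∈ Finset.range (S.card + 1), c e ℓ)) * v (i, e) := by
    rw [Fintype.sum_prod_type, Finset.sum_comm]
    refine Finset.sum_congr rfl fun e _ => Finset.sum_congr rfl fun i _ => ?_
    congr 1
    refine Finset.sum_congr rfl fun S _ => ?_
    rw [Finset.sum_range_succ]
    ring
  rw [Finset.sum_congr rfl fun p _ => mul_comm (v p) _, rhs_eq]
  refine Finset.sum_congr rfl fun e _ => ?_
  exact key_identity (fun j => x (j, e)) (fun i => v (i, e))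
    (fun k => ∑ ℓ ∈ Finset.range (k + 1), c e ℓ)

/-- **Smoothness of the fractional potential.**
The fractional potential on `ℝ^{n·m}` (with `m = |E|`) is
`Φ(x) = ∑_e ∑_{S ⊆ [n]} (∏_{j∈S} x_{j,e}) (∏_{j∉S} (1-x_{j,e})) ∑_{ℓ=0}^{|S|} c_e(ℓ)`.
If `0 ≤ c_e(ℓ) ≤ cmax` for all `ℓ ≤ n`, then its Euclidean gradient is
`2 n² cmax √m`-Lipschitz on the box `[0,1]^{n·m}`. -/
theorem fractional_potential_gradient_lipschitz
    {E : Type*} [Fintype E] (n : ℕ)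
    (c : E → ℕ → ℝ) (cmax : ℝ)
    (hc : ∀ e : E, ∀ ℓ ≤ n, 0 ≤ c e ℓ ∧ c e ℓ ≤ cmax)
    (Φ : EuclideanSpace ℝ (Fin n × E) → ℝ)
    (hΦ : ∀ x, Φ x = ∑ e : E, ∑ S ∈ (univ : Finset (Fin n)).powerset,
        (∏ j ∈ S, x (j, e)) * (∏ j ∈ univ \ S, (1 - x (j, e))) *
          ∑ ℓ ∈ Finset.range (S.card + 1), c e ℓ)
    (x x' : EuclideanSpace ℝ (Fin n × E))
    (hx : ∀ j e, x (j, e) ∈ Set.Icc (0:ℝ) 1)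
    (hx' : ∀ j e, x' (j, e) ∈ Set.Icc (0:ℝ) 1) :
    ‖gradient Φ x - gradient Φ x'‖ ≤
      2 * (n : ℝ) ^ 2 * cmax * Real.sqrt (Fintype.card E) * ‖x - x'‖ := by
  classical
  rcases isEmpty_or_nonempty (Fin n × E) with hemp | hne
  · have h0 : ∀ y : EuclideanSpace ℝ (Fin n × E), ‖y‖ = 0 := fun y => by
      simp [EuclideanSpace.norm_eq, Finset.univ_eq_empty]
    rw [h0, h0]
    simp
  · obtain ⟨i0, e0⟩ := hne
    have hn1 : (1 : ℝ) ≤ n := by exact_mod_cast i0.pos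
    have hnn : 1 ≤ n := i0.pos
    have hcm0 : 0 ≤ cmax := le_trans (hc e0 0 (Nat.zero_le n)).1 (hc e0 0 (Nat.zero_le n)).2
    haveI : Nonempty E := ⟨e0⟩
    have hm1 : (1 : ℝ) ≤ Real.sqrt (Fintype.card E) := by
      rw [show (1:ℝ) = Real.sqrt 1 from (Real.sqrt_one).symm]
      apply Real.sqrt_le_sqrt
      exact_mod_cast Fintype.card_pos (α := E)
    -- the gradient formula
    have hΦf : Φ = fun y : EuclideanSpace ℝ (Fin n × E) => ∑ e : E,
        ∑ S ∈ (univ : Finset (Fin n)).powerset,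
          (∏ j ∈ S, y (j, e)) * (∏ j ∈ univ \ S, (1 - y (j, e))) *
            ∑ ℓ ∈ Finset.range (S.card + 1), c e ℓ := funext hΦ
    have hgx : gradient Φ x = ((WithLp.equiv 2 _).symm fun p : Fin n × E =>
        ∑ S ∈ ((univ : Finset (Fin n)).erase p.1).powerset,
          (∏ j ∈ S, x (j, p.2)) * (∏ j ∈ ((univ : Finset (Fin n)).erase p.1) \ S, (1 - x (j, p.2)))
            * c p.2 (S.card + 1)) := by
      rw [hΦf]; exact (hasGrad n c x).gradient
    have hgx' : gradient Φ x' = ((WithLp.equiv 2 _).symm fun p : Fin n × E =>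
        ∑ S ∈ ((univ : Finset (Fin n)).erase p.1).powerset,
          (∏ j ∈ S, x' (j, p.2)) * (∏ j ∈ ((univ : Finset (Fin n)).erase p.1) \ S, (1 - x' (j, p.2)))
            * c p.2 (S.card + 1)) := by
      rw [hΦf]; exact (hasGrad n c x').gradient
    -- coordinatewise bound
    have coordbound : ∀ p : Fin n × E,
        |(gradient Φ x - gradient Φ x') p| ≤
          2 * cmax * ∑ j : Fin n, |x (j, p.2) - x' (j, p.2)| := by
      rintro ⟨i, e⟩
      have happ : (gradient Φ x - gradient Φ x') (i, e)
          = ∑ S ∈ ((univ : Finset (Fin n)).erase i).powerset,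
              ((∏ j ∈ S, x (j, e)) * (∏ j ∈ ((univ : Finset (Fin n)).erase i) \ S, (1 - x (j, e)))
                - (∏ j ∈ S, x' (j, e)) *
                    (∏ j ∈ ((univ : Finset (Fin n)).erase i) \ S, (1 - x' (j, e))))
                * c e (S.card + 1) := by
        rw [PiLp.sub_apply, hgx, hgx']
        simp only [WithLp.equiv_symm_apply, PiLp.toLp_apply]
        rw [← Finset.sum_sub_distrib]
        exact Finset.sum_congr rfl fun S _ => by ring
      rw [happ]
      have hcard : ∀ S ∈ ((univ : Finset (Fin n)).erase i).powerset, S.card + 1 ≤ n := by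
        intro S hS
        have := Finset.card_le_card (Finset.mem_powerset.1 hS)
        rw [Finset.card_erase_of_mem (mem_univ i), Finset.card_univ, Fintype.card_fin] at this
        omega
      calc |∑ S ∈ ((univ : Finset (Fin n)).erase i).powerset,
              ((∏ j ∈ S, x (j, e)) * (∏ j ∈ ((univ : Finset (Fin n)).erase i) \ S, (1 - x (j, e)))
                - (∏ j ∈ S, x' (j, e)) *
                    (∏ j ∈ ((univ : Finset (Fin n)).erase i) \ S, (1 - x' (j, e))))
                * c e (S.card + 1)|
          ≤ ∑ S ∈ ((univ : Finset (Fin n)).erase i).powerset,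
              |((∏ j ∈ S, x (j, e)) * (∏ j ∈ ((univ : Finset (Fin n)).erase i) \ S, (1 - x (j, e)))
                - (∏ j ∈ S, x' (j, e)) *
                    (∏ j ∈ ((univ : Finset (Fin n)).erase i) \ S, (1 - x' (j, e))))
                * c e (S.card + 1)| := Finset.abs_sum_le_sum_abs _ _
        _ ≤ ∑ S ∈ ((univ : Finset (Fin n)).erase i).powerset,
              |(∏ j ∈ S, x (j, e)) * (∏ j ∈ ((univ : Finset (Fin n)).erase i) \ S, (1 - x (j, e)))
                - (∏ j ∈ S, x' (j, e)) *
                    (∏ j ∈ ((univ : Finset (Fin n)).erase i) \ S, (1 - x' (j, e)))| * cmax := by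
            refine Finset.sum_le_sum fun S hS => ?_
            rw [abs_mul]
            refine mul_le_mul_of_nonneg_left ?_ (abs_nonneg _)
            rw [abs_of_nonneg (hc e _ (hcard S hS)).1]
            exact (hc e _ (hcard S hS)).2
        _ = (∑ S ∈ ((univ : Finset (Fin n)).erase i).powerset,
              |(∏ j ∈ S, x (j, e)) * (∏ j ∈ ((univ : Finset (Fin n)).erase i) \ S, (1 - x (j, e)))
                - (∏ j ∈ S, x' (j, e)) *
                    (∏ j ∈ ((univ : Finset (Fin n)).erase i) \ S, (1 - x' (j, e)))|) * cmax := by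
            rw [Finset.sum_mul]
        _ ≤ (2 * ∑ j ∈ (univ : Finset (Fin n)).erase i, |x (j, e) - x' (j, e)|) * cmax := by
            refine mul_le_mul_of_nonneg_right ?_ hcm0
            exact tv_bound _ (fun j => x (j, e)) (fun j => x' (j, e))
              (fun j => (Set.mem_Icc.1 (hx j e)))
              (fun j => (Set.mem_Icc.1 (hx' j e)))
        _ ≤ 2 * cmax * ∑ j : Fin n, |x (j, e) - x' (j, e)| := by
            have hsub : ∑ j ∈ (univ : Finset (Fin n)).erase i, |x (j, e) - x' (j, e)|
                ≤ ∑ j : Fin n, |x (j, e) - x' (j, e)| :=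
              Finset.sum_le_sum_of_subset_of_nonneg (Finset.subset_univ _)
                (fun j _ _ => abs_nonneg _)
            nlinarith [hsub]
    -- sum of squares
    have sqbound : ∑ p : Fin n × E, ‖(gradient Φ x - gradient Φ x') p‖ ^ 2
        ≤ (2 * (n : ℝ) * cmax) ^ 2 * ∑ p : Fin n × E, ‖(x - x') p‖ ^ 2 := by
      have step : ∀ p : Fin n × E, ‖(gradient Φ x - gradient Φ x') p‖ ^ 2
          ≤ (2 * cmax) ^ 2 * ((n : ℝ) * ∑ j : Fin n, ‖(x - x') (j, p.2)‖ ^ 2) := by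
        intro p
        have h1 : ‖(gradient Φ x - gradient Φ x') p‖ ^ 2
            ≤ (2 * cmax * ∑ j : Fin n, |x (j, p.2) - x' (j, p.2)|) ^ 2 := by
          rw [Real.norm_eq_abs, ← sq_abs]
          refine pow_le_pow_left₀ (abs_nonneg _) ?_ 2
          rw [abs_abs]
          exact coordbound p
        refine h1.trans ?_
        have h2 : (∑ j : Fin n, |x (j, p.2) - x' (j, p.2)|) ^ 2
            ≤ (n : ℝ) * ∑ j : Fin n, |x (j, p.2) - x' (j, p.2)| ^ 2 := by
          have := sq_sum_le_card_mul_sum_sq (s := (univ : Finset (Fin n)))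
            (f := fun j => |x (j, p.2) - x' (j, p.2)|)
          simpa [Finset.card_univ] using this
        have h3 : ∀ j : Fin n, |x (j, p.2) - x' (j, p.2)| ^ 2 = ‖(x - x') (j, p.2)‖ ^ 2 := by
          intro j
          rw [Real.norm_eq_abs, PiLp.sub_apply]
        calc (2 * cmax * ∑ j : Fin n, |x (j, p.2) - x' (j, p.2)|) ^ 2
            = (2 * cmax) ^ 2 * (∑ j : Fin n, |x (j, p.2) - x' (j, p.2)|) ^ 2 := by ring
          _ ≤ (2 * cmax) ^ 2 * ((n : ℝ) * ∑ j : Fin n, |x (j, p.2) - x' (j, p.2)| ^ 2) := by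
              nlinarith [h2, sq_nonneg (2 * cmax)]
          _ = (2 * cmax) ^ 2 * ((n : ℝ) * ∑ j : Fin n, ‖(x - x') (j, p.2)‖ ^ 2) := by
              rw [Finset.sum_congr rfl fun j _ => h3 j]
      calc ∑ p : Fin n × E, ‖(gradient Φ x - gradient Φ x') p‖ ^ 2
          ≤ ∑ p : Fin n × E, (2 * cmax) ^ 2 * ((n : ℝ) * ∑ j : Fin n, ‖(x - x') (j, p.2)‖ ^ 2) :=
            Finset.sum_le_sum fun p _ => step p
        _ = (2 * (n : ℝ) * cmax) ^ 2 * ∑ p : Fin n × E, ‖(x - x') p‖ ^ 2 := by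
            have swap : ∑ p : Fin n × E, ‖(x - x') p‖ ^ 2
                = ∑ e : E, ∑ j : Fin n, ‖(x - x') (j, e)‖ ^ 2 := by
              rw [Fintype.sum_prod_type, Finset.sum_comm]
            have lhs : ∑ p : Fin n × E,
                  (2 * cmax) ^ 2 * ((n : ℝ) * ∑ j : Fin n, ‖(x - x') (j, p.2)‖ ^ 2)
                = ∑ e : E, (n : ℝ) *
                    ((2 * cmax) ^ 2 * ((n : ℝ) * ∑ j : Fin n, ‖(x - x') (j, e)‖ ^ 2)) := by
              rw [Fintype.sum_prod_type, Finset.sum_comm]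
              exact Finset.sum_congr rfl fun e _ => by simp
            rw [lhs, swap, Finset.mul_sum]
            exact Finset.sum_congr rfl fun e _ => by ring
    -- conclude
    have hnorm : ‖gradient Φ x - gradient Φ x'‖ ≤ 2 * (n : ℝ) * cmax * ‖x - x'‖ := by
      rw [EuclideanSpace.norm_eq, EuclideanSpace.norm_eq]
      have h4 : Real.sqrt (∑ p : Fin n × E, ‖(gradient Φ x - gradient Φ x') p‖ ^ 2)
          ≤ Real.sqrt ((2 * (n : ℝ) * cmax) ^ 2 * ∑ p : Fin n × E, ‖(x - x') p‖ ^ 2) :=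
        Real.sqrt_le_sqrt sqbound
      refine h4.trans_eq ?_
      rw [Real.sqrt_mul (sq_nonneg _), Real.sqrt_sq (by positivity)]
    refine hnorm.trans ?_
    have hd : (0:ℝ) ≤ ‖x - x'‖ := norm_nonneg _
    have hnsq : (n : ℝ) ≤ (n : ℝ) ^ 2 := by nlinarith
    nlinarith [mul_le_mul_of_nonneg_right (mul_le_mul_of_nonneg_right hnsq hcm0) hd,
      mul_le_mul_of_nonneg_right hm1 (mul_nonneg (mul_nonneg (by positivity : (0:ℝ) ≤ 2 * (n:ℝ)^2) hcm0) hd)]
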